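/- Let n ≥ 2 be an integer, 0 < R₁ < R₂, and A₁₀, A₁₁, A₂₀, A₂₁ ∈ ℝ. Then there exist unique real numbers c₀, c₁, c₂, c₃, c₄ such that the polynomial Q(ρ) = Σ_{α=0}^{4} c_α ρ^α satisfies Q(R₁) = A₁₀, Q(R₂) = A₂₀, Q'(R₁) = A₁₁, Q'(R₂) = A₂₁, and Σ_{α=0}^{4} c_α (R₂^{n+α} − R₁^{n+α})/(n+α) = 0. -/

import Mathlib

set_option maxHeartbeats 1000000

open Polynomial intervalIntegral

private lemma double_root_dvd {p : ℝ[X]} {a : ℝ} (h0 : p.eval a = 0)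
    (h1 : p.derivative.eval a = 0) : (X - C a) ^ 2 ∣ p := by
  obtain ⟨q, hq⟩ := (dvd_iff_isRoot (p := p)).2 h0
  have hd : p.derivative = q + (X - C a) * q.derivative := by
    rw [hq, derivative_mul]; simp
  have hqa : q.eval a = 0 := by
    have := h1; rw [hd] at this; simpa using this
  obtain ⟨r, hr⟩ := (dvd_iff_isRoot (p := q)).2 hqa
  exact ⟨r, by rw [hq, hr]; ring⟩

private lemma deriv_poly_sum (c : Fin 5 → ℝ) (x : ℝ) :
    deriv (fun ρ : ℝ => ∑ α : Fin 5, c α * ρ ^ (α : ℕ)) x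
      = ∑ α : Fin 5, c α * ((α : ℕ) * x ^ ((α : ℕ) - 1)) := by
  have h : HasDerivAt (fun ρ : ℝ => ∑ α : Fin 5, c α * ρ ^ (α : ℕ))
      (∑ α : Fin 5, c α * ((α : ℕ) * x ^ ((α : ℕ) - 1))) x :=
    HasDerivAt.fun_sum fun α _ => (hasDerivAt_pow (α : ℕ) x).const_mul (c α)
  exact h.deriv

private lemma kernel_zero (n : ℕ) (hn : 2 ≤ n) (R₁ R₂ : ℝ) (h1 : 0 < R₁) (h12 : R₁ < R₂)
    (c : Fin 5 → ℝ)
    (e1 : (∑ α : Fin 5, c α * R₁ ^ (α : ℕ)) = 0)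
    (e2 : (∑ α : Fin 5, c α * R₂ ^ (α : ℕ)) = 0)
    (e3 : (∑ α : Fin 5, c α * ((α : ℕ) * R₁ ^ ((α : ℕ) - 1))) = 0)
    (e4 : (∑ α : Fin 5, c α * ((α : ℕ) * R₂ ^ ((α : ℕ) - 1))) = 0)
    (e5 : (∑ α : Fin 5, c α * ((R₂ ^ (n + (α : ℕ)) - R₁ ^ (n + (α : ℕ))) / (n + (α : ℕ)))) = 0) :
    c = 0 := by
  set Q : ℝ[X] := ∑ α : Fin 5, C (c α) * X ^ (α : ℕ) with hQdef
  have hQeval : ∀ x : ℝ, Q.eval x = ∑ α : Fin 5, c α * x ^ (α : ℕ) := by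
    intro x; simp [hQdef, eval_finset_sum]
  have hQder : ∀ x : ℝ, Q.derivative.eval x = ∑ α : Fin 5, c α * ((α : ℕ) * x ^ ((α : ℕ) - 1)) := by
    intro x
    simp only [hQdef, derivative_sum, derivative_C_mul, derivative_X_pow, eval_finset_sum]
    simp [mul_assoc]
  have hQ0 : Q = 0 := by
    by_contra hQne
    have hd1 : (X - C R₁) ^ 2 ∣ Q :=
      double_root_dvd (by rw [hQeval]; exact e1) (by rw [hQder]; exact e3)
    have hd2 : (X - C R₂) ^ 2 ∣ Q :=
      double_root_dvd (by rw [hQeval]; exact e2) (by rw [hQder]; exact e4)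
    have hco : IsCoprime ((X - C R₁) ^ 2) ((X - C R₂) ^ 2) :=
      (isCoprime_X_sub_C_of_isUnit_sub (by
        simpa using (sub_ne_zero.2 h12.ne).isUnit)).pow
    obtain ⟨g, hg⟩ := hco.mul_dvd hd1 hd2
    have hsmonic : ((X - C R₁) ^ 2 * (X - C R₂) ^ 2 : ℝ[X]).Monic :=
      ((monic_X_sub_C R₁).pow 2).mul ((monic_X_sub_C R₂).pow 2)
    have hsdeg : ((X - C R₁) ^ 2 * (X - C R₂) ^ 2 : ℝ[X]).natDegree = 4 := by
      rw [((monic_X_sub_C R₁).pow 2).natDegree_mul ((monic_X_sub_C R₂).pow 2)]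
      simp [natDegree_pow]
    have hQdeg : Q.natDegree ≤ 4 := by
      apply Polynomial.natDegree_sum_le_of_forall_le
      intro α _
      exact (natDegree_C_mul_le _ _).trans (by simp [natDegree_X_pow]; omega)
    have hgne : g ≠ 0 := by rintro rfl; simp at hg; exact hQne hg
    have hdegg : g.natDegree = 0 := by
      have := Polynomial.natDegree_mul (hsmonic.ne_zero) hgne
      rw [← hg] at this
      omega
    obtain ⟨k, hk⟩ := Polynomial.natDegree_eq_zero.1 hdegg
    have hkne : k ≠ 0 := by rintro rfl; simp at hk; exact hgne hk.symm
    set I : ℝ := ∫ x in R₁..R₂, (x - R₁) ^ 2 * (x - R₂) ^ 2 * x ^ (n - 1) with hI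
    have hIpos : 0 < I := by
      apply intervalIntegral_pos_of_pos_on
      · exact (Continuous.intervalIntegrable
          ((((continuous_id.sub continuous_const).pow 2).mul
            ((continuous_id.sub continuous_const).pow 2)).mul (continuous_pow _)) _ _)
      · intro x hx
        have hx1 : 0 < (x - R₁) ^ 2 := pow_pos (sub_pos.2 hx.1) 2
        have hx2 : 0 < (x - R₂) ^ 2 := by
          have hne : x - R₂ ≠ 0 := sub_ne_zero.2 (ne_of_lt hx.2)
          exact lt_of_le_of_ne (sq_nonneg _) (Ne.symm (pow_ne_zero 2 hne))
        have hx3 : 0 < x ^ (n - 1) := pow_pos (h1.trans hx.1) _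
        positivity
      · exact h12
    have hInt : (∫ x in R₁..R₂, Q.eval x * x ^ (n - 1))
        = ∑ α : Fin 5, c α * ((R₂ ^ (n + (α : ℕ)) - R₁ ^ (n + (α : ℕ))) / (n + (α : ℕ))) := by
      have hpt : ∀ x : ℝ, Q.eval x * x ^ (n - 1)
          = ∑ α : Fin 5, c α * x ^ ((α : ℕ) + (n - 1)) := by
        intro x
        rw [hQeval, Finset.sum_mul]
        exact Finset.sum_congr rfl fun α _ => by rw [pow_add, mul_assoc]
      simp_rw [hpt]
      rw [intervalIntegral.integral_finset_sum (fun α _ =>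
        (Continuous.intervalIntegrable (continuous_const.fun_mul (continuous_pow _)) _ _))]
      refine Finset.sum_congr rfl fun α _ => ?_
      rw [intervalIntegral.integral_const_mul, integral_pow]
      have hm : (α : ℕ) + (n - 1) + 1 = n + (α : ℕ) := by omega
      rw [hm]
      congr 1
      congr 1
      push_cast [Nat.cast_sub (show 1 ≤ n by omega)]
      ring
    have hQk : ∀ x : ℝ, Q.eval x = k * ((x - R₁) ^ 2 * (x - R₂) ^ 2) := by
      intro x
      rw [hg, ← hk]
      simp only [eval_mul, eval_pow, eval_sub, eval_X, eval_C]
      ring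
    have hzero : k * I = 0 := by
      rw [hI, ← intervalIntegral.integral_const_mul]
      rw [show (∫ x in R₁..R₂, k * ((x - R₁) ^ 2 * (x - R₂) ^ 2 * x ^ (n - 1)))
          = ∫ x in R₁..R₂, Q.eval x * x ^ (n - 1) from by
        refine intervalIntegral.integral_congr fun x _ => ?_
        rw [hQk]; ring]
      rw [hInt, ← e5]
    rcases mul_eq_zero.1 hzero with h | h
    · exact hkne h
    · exact absurd h hIpos.ne'
  funext α
  have hco := congrArg (fun p : ℝ[X] => p.coeff (α : ℕ)) hQ0
  simp only [hQdef, finset_sum_coeff, coeff_C_mul, coeff_X_pow, coeff_zero] at hco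
  rw [Finset.sum_eq_single α] at hco
  · simpa using hco
  · intro β _ hβ
    have : (α : ℕ) ≠ (β : ℕ) := fun h => hβ (Fin.ext h.symm)
    simp [this]
  · simp

private noncomputable def Lmap (w : Fin 5 → Fin 5 → ℝ) : (Fin 5 → ℝ) →ₗ[ℝ] (Fin 5 → ℝ) where
  toFun c := fun i => ∑ α : Fin 5, c α * w i α
  map_add' x y := by funext i; simp [add_mul, Finset.sum_add_distrib]
  map_smul' r x := by
    funext i
    simp [Finset.mul_sum, mul_assoc]

theorem stmt_8 (n : ℕ) (hn : 2 ≤ n) (R₁ R₂ : ℝ) (h1 : 0 < R₁) (h12 : R₁ < R₂)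
    (A₁₀ A₁₁ A₂₀ A₂₁ : ℝ) :
    ∃! c : Fin 5 → ℝ,
      (∑ α : Fin 5, c α * R₁ ^ (α : ℕ)) = A₁₀ ∧
      (∑ α : Fin 5, c α * R₂ ^ (α : ℕ)) = A₂₀ ∧
      deriv (fun ρ : ℝ => ∑ α : Fin 5, c α * ρ ^ (α : ℕ)) R₁ = A₁₁ ∧
      deriv (fun ρ : ℝ => ∑ α : Fin 5, c α * ρ ^ (α : ℕ)) R₂ = A₂₁ ∧
      (∑ α : Fin 5, c α * (R₂ ^ (n + (α : ℕ)) - R₁ ^ (n + (α : ℕ))) / (n + (α : ℕ))) = 0 := by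
  set w : Fin 5 → Fin 5 → ℝ := ![
    (fun α : Fin 5 => R₁ ^ (α : ℕ)),
    (fun α : Fin 5 => R₂ ^ (α : ℕ)),
    (fun α : Fin 5 => ((α : ℕ) : ℝ) * R₁ ^ ((α : ℕ) - 1)),
    (fun α : Fin 5 => ((α : ℕ) : ℝ) * R₂ ^ ((α : ℕ) - 1)),
    (fun α : Fin 5 => (R₂ ^ (n + (α : ℕ)) - R₁ ^ (n + (α : ℕ))) / (n + (α : ℕ)))] with hw
  have hw0 : w 0 = fun α : Fin 5 => R₁ ^ (α : ℕ) := rfl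
  have hw1 : w 1 = fun α : Fin 5 => R₂ ^ (α : ℕ) := rfl
  have hw2 : w 2 = fun α : Fin 5 => ((α : ℕ) : ℝ) * R₁ ^ ((α : ℕ) - 1) := rfl
  have hw3 : w 3 = fun α : Fin 5 => ((α : ℕ) : ℝ) * R₂ ^ ((α : ℕ) - 1) := rfl
  have hw4 : w 4 = fun α : Fin 5 => (R₂ ^ (n + (α : ℕ)) - R₁ ^ (n + (α : ℕ))) / (n + (α : ℕ)) := rfl
  set b : Fin 5 → ℝ := ![A₁₀, A₂₀, A₁₁, A₂₁, 0] with hb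
  set L : (Fin 5 → ℝ) →ₗ[ℝ] (Fin 5 → ℝ) := Lmap w with hL
  have hLapp : ∀ (d : Fin 5 → ℝ) (i : Fin 5), L d i = ∑ α : Fin 5, d α * w i α := fun _ _ => rfl
  have hinj : Function.Injective L := by
    rw [← LinearMap.ker_eq_bot, LinearMap.ker_eq_bot']
    intro c hc
    refine kernel_zero n hn R₁ R₂ h1 h12 c ?_ ?_ ?_ ?_ ?_
    · have := congrFun hc 0; rw [hLapp, hw0] at this; exact this
    · have := congrFun hc 1; rw [hLapp, hw1] at this; exact this
    · have := congrFun hc 2; rw [hLapp, hw2] at this; exact this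
    · have := congrFun hc 3; rw [hLapp, hw3] at this; exact this
    · have := congrFun hc 4; rw [hLapp, hw4] at this; exact this
  have hsurj : Function.Surjective L := LinearMap.injective_iff_surjective.1 hinj
  obtain ⟨c, hc⟩ := hsurj b
  have hbeq : ∀ d : Fin 5 → ℝ, L d = b ↔
      ((∑ α : Fin 5, d α * R₁ ^ (α : ℕ)) = A₁₀ ∧
      (∑ α : Fin 5, d α * R₂ ^ (α : ℕ)) = A₂₀ ∧
      (∑ α : Fin 5, d α * (((α : ℕ) : ℝ) * R₁ ^ ((α : ℕ) - 1))) = A₁₁ ∧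
      (∑ α : Fin 5, d α * (((α : ℕ) : ℝ) * R₂ ^ ((α : ℕ) - 1))) = A₂₁ ∧
      (∑ α : Fin 5, d α * ((R₂ ^ (n + (α : ℕ)) - R₁ ^ (n + (α : ℕ))) / (n + (α : ℕ)))) = 0) := by
    intro d
    constructor
    · intro h
      refine ⟨?_, ?_, ?_, ?_, ?_⟩
      · have := congrFun h 0; rw [hLapp, hw0] at this; exact this
      · have := congrFun h 1; rw [hLapp, hw1] at this; exact this
      · have := congrFun h 2; rw [hLapp, hw2] at this; exact this
      · have := congrFun h 3; rw [hLapp, hw3] at this; exact this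
      · have := congrFun h 4; rw [hLapp, hw4] at this; exact this
    · rintro ⟨g0, g1, g2, g3, g4⟩
      funext i
      fin_cases i
      · exact g0
      · exact g1
      · exact g2
      · exact g3
      · exact g4
  have hdiv : ∀ (d : Fin 5 → ℝ),
      (∑ α : Fin 5, d α * (R₂ ^ (n + (α : ℕ)) - R₁ ^ (n + (α : ℕ))) / (n + (α : ℕ)))
      = ∑ α : Fin 5, d α * ((R₂ ^ (n + (α : ℕ)) - R₁ ^ (n + (α : ℕ))) / (n + (α : ℕ))) :=
    fun d => Finset.sum_congr rfl fun α _ => (mul_div_assoc _ _ _)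
  obtain ⟨p1, p2, p3, p4, p5⟩ := (hbeq c).1 hc
  refine ⟨c, ⟨p1, p2, ?_, ?_, ?_⟩, ?_⟩
  · rw [deriv_poly_sum]; exact p3
  · rw [deriv_poly_sum]; exact p4
  · rw [hdiv]; exact p5
  · rintro d ⟨q1, q2, q3, q4, q5⟩
    rw [deriv_poly_sum] at q3 q4
    rw [hdiv] at q5
    exact hinj (by rw [hc]; exact (hbeq d).2 ⟨q1, q2, q3, q4, q5⟩)
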